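/- Suppose x ∈ ℝⁿ satisfies x > 0 componentwise and A x = b. Let W = diag(x₁/c₁,…,xₙ/cₙ), L = A W Aᵀ, and let p be the solution of L p = b. Then ‖Aᵀ p‖_∞ ≤ 𝒟 · C_s, where 𝒟 = max{|det A'| : A' is a square submatrix of A} and C_s = Σᵢ cᵢ. -/

import Mathlib

open Matrix Filter Set Topology

/-- The real matrix obtained from an integer matrix by coercion of entries. -/
noncomputable def rmat {m n : ℕ} (A : Matrix (Fin m) (Fin n) ℤ) :
    Matrix (Fin m) (Fin n) ℝ :=
  A.map (Int.cast : ℤ → ℝ)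

/-- The diagonal matrix `W = diag (x i / c i)`. -/
noncomputable def physW {n : ℕ} (c x : Fin n → ℝ) : Matrix (Fin n) (Fin n) ℝ :=
  Matrix.diagonal (fun i => x i / c i)

/-- The Physarum vector `q = W Aᵀ L⁻¹ b` where `L = A W Aᵀ`. -/
noncomputable def physQ {m n : ℕ} (B : Matrix (Fin m) (Fin n) ℝ) (b : Fin m → ℝ)
    (c x : Fin n → ℝ) : Fin n → ℝ :=
  physW c x *ᵥ (Bᵀ *ᵥ ((B * physW c x * Bᵀ)⁻¹ *ᵥ b))

/-- The set of absolute values of determinants of square submatrices of `A` (as reals). -/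
def subdets {m n : ℕ} (A : Matrix (Fin m) (Fin n) ℤ) : Set ℝ :=
  {d | ∃ (k : ℕ) (f : Fin k → Fin m) (g : Fin k → Fin n),
    Function.Injective f ∧ Function.Injective g ∧
    d = |((A.submatrix f g).det : ℝ)|}

/-- `x` is a solution of the Physarum dynamics `ẋ = q - x` on the time set `s`,
staying in the positive orthant. -/
def IsPhysSolOn {m n : ℕ} (B : Matrix (Fin m) (Fin n) ℝ) (b : Fin m → ℝ)
    (c : Fin n → ℝ) (x : ℝ → Fin n → ℝ) (s : Set ℝ) : Prop :=
  ∀ t ∈ s, (∀ i, 0 < x t i) ∧ HasDerivWithinAt x (physQ B b c (x t) - x t) s t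

/-! ### Cauchy–Binet -/

section CauchyBinet

variable {R : Type*} [CommRing R] {k N : ℕ}

lemma cb_fun (P : Matrix (Fin k) (Fin N) R) (Q : Matrix (Fin N) (Fin k) R) :
    (P * Q).det = ∑ r : Fin k → Fin N, (∏ i, P i (r i)) * (Q.submatrix r id).det := by
  have h1 : (P * Q) = Matrix.of (fun i => ∑ j, P i j • Q j) := by
    ext i l
    simp [Matrix.mul_apply, Finset.sum_apply]
  have h2 : (P * Q).det
      = (Matrix.detRowAlternating : (Fin k → R) [⋀^Fin k]→ₗ[R] R).toMultilinearMap
          (fun i => ∑ j, P i j • Q j) := by rw [h1]; rfl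
  rw [h2, (Matrix.detRowAlternating : (Fin k → R) [⋀^Fin k]→ₗ[R] R).toMultilinearMap.map_sum]
  refine Finset.sum_congr rfl fun r _ => ?_
  rw [MultilinearMap.map_smul_univ]
  rfl

lemma per_s (P : Matrix (Fin k) (Fin N) R) (Q : Matrix (Fin N) (Fin k) R)
    (e : Fin k → Fin N) :
    ∑ σ : Equiv.Perm (Fin k), (∏ i, P i (e (σ i))) * (Q.submatrix (e ∘ σ) id).det
      = (P.submatrix id e).det * (Q.submatrix e id).det := by
  have h1 : ∀ σ : Equiv.Perm (Fin k),
      (Q.submatrix (e ∘ σ) id).det = (Equiv.Perm.sign σ : ℤ) * (Q.submatrix e id).det := by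
    intro σ
    have : Q.submatrix (e ∘ σ) id = (Q.submatrix e id).submatrix σ id := by
      simp [Matrix.submatrix_submatrix]
    rw [this, Matrix.det_permute]
  simp_rw [h1]
  have h2 : (P.submatrix id e).det = ∑ σ : Equiv.Perm (Fin k),
      (Equiv.Perm.sign σ : ℤ) * ∏ i, P i (e (σ i)) := by
    rw [← Matrix.det_transpose, Matrix.det_apply]
    refine Finset.sum_congr rfl fun σ _ => ?_
    rw [Units.smul_def, zsmul_eq_mul]
    rfl
  rw [h2, Finset.sum_mul]
  refine Finset.sum_congr rfl fun σ _ => by ring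

lemma image_orderEmbOfFin_univ (s : Finset (Fin N)) (h : s.card = k) :
    Finset.image (s.orderEmbOfFin h) Finset.univ = s := by
  apply Finset.coe_injective
  rw [Finset.coe_image, Finset.coe_univ, Set.image_univ, Finset.range_orderEmbOfFin]

lemma cb_grouped (P : Matrix (Fin k) (Fin N) R) (Q : Matrix (Fin N) (Fin k) R) :
    (P * Q).det = ∑ s : {s : Finset (Fin N) // s.card = k},
      (P.submatrix id (s.1.orderEmbOfFin s.2)).det *
        (Q.submatrix (s.1.orderEmbOfFin s.2) id).det := by
  classical
  set F : (Fin k → Fin N) → R := fun r => (∏ i, P i (r i)) * (Q.submatrix r id).det with hF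
  have step1 : (P * Q).det = ∑ r ∈ Finset.univ.filter (fun r => Function.Injective r), F r := by
    rw [cb_fun, Finset.sum_filter_of_ne]
    intro r _ hne
    by_contra hinj
    apply hne
    obtain ⟨a, b, hab, hne'⟩ : ∃ a b, r a = r b ∧ a ≠ b := by
      simp only [Function.Injective] at hinj
      push_neg at hinj
      obtain ⟨a, b, h1, h2⟩ := hinj
      exact ⟨a, b, h1, h2⟩
    have : (Q.submatrix r id).det = 0 :=
      Matrix.det_zero_of_row_eq hne' (by ext j; simp [hab])
    simp [hF, this]
  have step2 : ∀ s : {s : Finset (Fin N) // s.card = k},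
      (P.submatrix id (s.1.orderEmbOfFin s.2)).det *
        (Q.submatrix (s.1.orderEmbOfFin s.2) id).det
      = ∑ σ : Equiv.Perm (Fin k), F ((s.1.orderEmbOfFin s.2) ∘ σ) := by
    intro s
    rw [← per_s]
    rfl
  rw [step1]
  have step2' : ∑ s : {s : Finset (Fin N) // s.card = k},
      (P.submatrix id (s.1.orderEmbOfFin s.2)).det *
        (Q.submatrix (s.1.orderEmbOfFin s.2) id).det
      = ∑ p : {s : Finset (Fin N) // s.card = k} × Equiv.Perm (Fin k),
          F ((p.1.1.orderEmbOfFin p.1.2) ∘ p.2) := by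
    rw [Fintype.sum_prod_type]
    exact Finset.sum_congr rfl fun s _ => step2 s
  rw [step2']
  symm
  refine Finset.sum_bij (fun p _ => (p.1.1.orderEmbOfFin p.1.2) ∘ p.2) ?_ ?_ ?_ ?_
  · intro p _
    simp only [Finset.mem_filter, Finset.mem_univ, true_and]
    exact ((p.1.1.orderEmbOfFin p.1.2).injective).comp p.2.injective
  · rintro ⟨s, σ⟩ _ ⟨s', σ'⟩ _ heq
    have key : ∀ (t : {s : Finset (Fin N) // s.card = k}) (τ : Equiv.Perm (Fin k)),
        Finset.image ((t.1.orderEmbOfFin t.2) ∘ τ) Finset.univ = t.1 := by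
      intro t τ
      rw [← Finset.image_image, Finset.image_univ_equiv, image_orderEmbOfFin_univ]
    have him : s.1 = s'.1 := by
      rw [← key s σ, ← key s' σ']
      exact congrArg (fun f => Finset.image f Finset.univ) heq
    have hs : s = s' := Subtype.ext him
    subst hs
    have hσ : σ = σ' :=
      Equiv.ext fun i => (s.1.orderEmbOfFin s.2).injective (congrFun heq i)
    rw [hσ]
  · intro r hr
    simp only [Finset.mem_filter, Finset.mem_univ, true_and] at hr
    set s : Finset (Fin N) := Finset.image r Finset.univ with hs
    have hcard : s.card = k := by
      rw [hs, Finset.card_image_of_injective _ hr, Finset.card_univ, Fintype.card_fin]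
    have hrange : Set.range r = ↑s := by
      rw [hs, Finset.coe_image, Finset.coe_univ, Set.image_univ]
    set σ : Equiv.Perm (Fin k) :=
      ((Equiv.ofInjective r hr).trans ((Equiv.setCongr hrange).trans
        (s.orderIsoOfFin hcard).symm.toEquiv)) with hσ
    refine ⟨⟨⟨s, hcard⟩, σ⟩, Finset.mem_univ _, ?_⟩
    funext i
    show (s.orderEmbOfFin hcard) (σ i) = r i
    rw [hσ]
    simp only [Equiv.trans_apply]
    rw [← Finset.coe_orderIsoOfFin_apply]
    show (((s.orderIsoOfFin hcard) ((s.orderIsoOfFin hcard).symm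
      ((Equiv.setCongr hrange) ((Equiv.ofInjective r hr) i)))) : Fin N) = r i
    rw [OrderIso.apply_symm_apply]
    rfl
  · intro p _
    rfl

end CauchyBinet

/-! ### Linear algebra facts -/

lemma rank_vecMul_inj {m n : ℕ} (B : Matrix (Fin m) (Fin n) ℝ) (h : B.rank = m)
    (v : Fin m → ℝ) (hv : Bᵀ *ᵥ v = 0) : v = 0 := by
  have htop : LinearMap.range B.mulVecLin = ⊤ := by
    apply Submodule.eq_top_of_finrank_eq
    rw [← Matrix.rank]
    rw [h, Module.finrank_fintype_fun_eq_card, Fintype.card_fin]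
  obtain ⟨y, hy⟩ := LinearMap.range_eq_top.mp htop v
  have h0 : v ⬝ᵥ v = 0 := by
    have hyv : B *ᵥ y = v := hy
    calc v ⬝ᵥ v = v ⬝ᵥ (B *ᵥ y) := by rw [hyv]
    _ = (v ᵥ* B) ⬝ᵥ y := by rw [dotProduct_mulVec]
    _ = (Bᵀ *ᵥ v) ⬝ᵥ y := by rw [Matrix.mulVec_transpose]
    _ = 0 := by rw [hv, zero_dotProduct]
  exact dotProduct_self_eq_zero.mp h0

lemma L_posdef {m n : ℕ} (B : Matrix (Fin m) (Fin n) ℝ) (w : Fin n → ℝ) (hw : ∀ i, 0 < w i)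
    (hB : ∀ v : Fin m → ℝ, Bᵀ *ᵥ v = 0 → v = 0) :
    (B * Matrix.diagonal w * Bᵀ).PosDef := by
  rw [posDef_iff_dotProduct_mulVec]
  constructor
  · rw [Matrix.IsHermitian, conjTranspose_eq_transpose_of_trivial, Matrix.transpose_mul,
      Matrix.transpose_mul, Matrix.transpose_transpose, Matrix.diagonal_transpose,
      Matrix.mul_assoc]
  · intro v hv
    have hstar : star v = v := by funext i; simp
    have hy : (B * Matrix.diagonal w * Bᵀ) *ᵥ v = B *ᵥ (Matrix.diagonal w *ᵥ (Bᵀ *ᵥ v)) := by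
      rw [Matrix.mulVec_mulVec, Matrix.mulVec_mulVec]
    set y := Bᵀ *ᵥ v with hydef
    have hyne : y ≠ 0 := fun h => hv (hB v h)
    rw [hstar, hy]
    have hdot : v ⬝ᵥ (B *ᵥ (Matrix.diagonal w *ᵥ y)) = y ⬝ᵥ (Matrix.diagonal w *ᵥ y) := by
      rw [dotProduct_mulVec, ← Matrix.mulVec_transpose]
    rw [hdot]
    have hsum : y ⬝ᵥ (Matrix.diagonal w *ᵥ y) = ∑ i, w i * (y i * y i) := by
      simp only [dotProduct, Matrix.mulVec_diagonal]
      exact Finset.sum_congr rfl fun i _ => by ring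
    rw [hsum]
    obtain ⟨i0, hi0⟩ := Function.ne_iff.mp hyne
    refine Finset.sum_pos' (fun i _ => mul_nonneg (hw i).le (mul_self_nonneg _))
      ⟨i0, Finset.mem_univ _, mul_pos (hw i0) (mul_self_pos.mpr hi0)⟩

lemma bordered_det {m : ℕ} (L : Matrix (Fin m) (Fin m) ℝ) (hL : IsUnit L.det)
    (u v : Fin m → ℝ) (t : ℝ) :
    (Matrix.det ((Matrix.fromBlocks L (Matrix.of fun k (_ : Fin 1) => u k)
        (Matrix.of fun (_ : Fin 1) k => v k) (Matrix.of fun _ _ => t)).submatrix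
        finSumFinEquiv.symm finSumFinEquiv.symm))
      = L.det * (t - v ⬝ᵥ (L⁻¹ *ᵥ u)) := by
  haveI := L.invertibleOfIsUnitDet hL
  rw [Matrix.det_submatrix_equiv_self, Matrix.det_fromBlocks₁₁]
  congr 1
  rw [Matrix.det_fin_one]
  simp only [Matrix.sub_apply, Matrix.of_apply, Matrix.mul_apply, Matrix.invOf_eq_nonsing_inv,
    Matrix.mulVec, dotProduct, Finset.sum_mul]
  congr 1
  rw [Finset.sum_comm]
  refine Finset.sum_congr rfl fun k _ => ?_
  rw [Finset.mul_sum]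
  refine Finset.sum_congr rfl fun l _ => by ring

/-! ### The bordered matrices -/

/-- integer matrix `A` with an extra standard-basis row `e_j` appended. -/
def intU {m n : ℕ} (A : Matrix (Fin m) (Fin n) ℤ) (j : Fin n) :
    Matrix (Fin (m+1)) (Fin n) ℤ :=
  Matrix.of (Fin.snoc (fun k => fun l => A k l) (fun l => if l = j then 1 else 0))

lemma intU_castSucc {m n : ℕ} (A : Matrix (Fin m) (Fin n) ℤ) (j : Fin n) (k : Fin m)
    (l : Fin n) : intU A j (Fin.castSucc k) l = A k l := by
  simp [intU, Fin.snoc_castSucc]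

lemma intU_last {m n : ℕ} (A : Matrix (Fin m) (Fin n) ℤ) (j : Fin n) (l : Fin n) :
    intU A j (Fin.last m) l = if l = j then 1 else 0 := by
  simp [intU, Fin.snoc_last]

/-- the real version. -/
noncomputable def rU {m n : ℕ} (A : Matrix (Fin m) (Fin n) ℤ) (j : Fin n) :
    Matrix (Fin (m+1)) (Fin n) ℝ := (intU A j).map (Int.cast : ℤ → ℝ)

lemma rU_castSucc {m n : ℕ} (A : Matrix (Fin m) (Fin n) ℤ) (j : Fin n) (k : Fin m) (l : Fin n) :
    rU A j (Fin.castSucc k) l = rmat A k l := by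
  simp [rU, Matrix.map_apply, intU, rmat, Fin.snoc_castSucc]

lemma rU_last {m n : ℕ} (A : Matrix (Fin m) (Fin n) ℤ) (j : Fin n) (l : Fin n) :
    rU A j (Fin.last m) l = if l = j then 1 else 0 := by
  simp only [rU, Matrix.map_apply, intU, Matrix.of_apply, Fin.snoc_last]
  split <;> simp

lemma one_mem_subdets {m n : ℕ} (A : Matrix (Fin m) (Fin n) ℤ) : (1 : ℝ) ∈ subdets A := by
  refine ⟨0, Fin.elim0, Fin.elim0, fun a => a.elim0, fun a => a.elim0, ?_⟩
  rw [Matrix.det_fin_zero]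
  norm_num

lemma D_ge_one {m n : ℕ} {A : Matrix (Fin m) (Fin n) ℤ} {𝒟 : ℝ}
    (hD : IsGreatest (subdets A) 𝒟) : 1 ≤ 𝒟 :=
  hD.2 (one_mem_subdets A)

/-- the determinant of any `(m+1)`-column submatrix of `intU A i` is bounded by `𝒟`. -/
lemma delta_bound {m n : ℕ} (A : Matrix (Fin m) (Fin n) ℤ) {𝒟 : ℝ}
    (hD : IsGreatest (subdets A) 𝒟) (i : Fin n) (e : Fin (m+1) → Fin n)
    (he : Function.Injective e) :
    |((((intU A i).submatrix id e).det : ℤ) : ℝ)| ≤ 𝒟 := by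
  set M := (intU A i).submatrix id e with hM
  by_cases hex : ∃ l₀, e l₀ = i
  · obtain ⟨l₀, hl₀⟩ := hex
    have hrow : det M = ∑ l : Fin (m+1),
        (-1) ^ (((Fin.last m : Fin (m+1)) : ℕ) + (l : ℕ)) * M (Fin.last m) l *
        det (M.submatrix (Fin.last m).succAbove l.succAbove) :=
      Matrix.det_succ_row M (Fin.last m)
    have hentry : ∀ l, M (Fin.last m) l = if l = l₀ then 1 else 0 := by
      intro l
      rw [hM]
      simp only [Matrix.submatrix_apply, id_eq]
      rw [intU_last]
      by_cases h : l = l₀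
      · subst h; simp [hl₀]
      · have : e l ≠ i := fun hc => h (he (hc.trans hl₀.symm))
        simp [this, h]
    have hcollapse : det M = (-1) ^ (((Fin.last m : Fin (m+1)) : ℕ) + (l₀ : ℕ)) *
        det (M.submatrix (Fin.last m).succAbove l₀.succAbove) := by
      rw [hrow, Finset.sum_eq_single l₀]
      · rw [hentry l₀, if_pos rfl, mul_one]
      · intro l _ hl
        rw [hentry l, if_neg hl, mul_zero, zero_mul]
      · intro h; exact absurd (Finset.mem_univ _) h
    have hsub : M.submatrix (Fin.last m).succAbove l₀.succAbove
        = A.submatrix id (e ∘ l₀.succAbove) := by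
      ext a b
      simp only [Matrix.submatrix_apply, hM, Fin.succAbove_last, id_eq, Function.comp_apply]
      exact intU_castSucc A i a (e (l₀.succAbove b))
    have hmem : |(((A.submatrix id (e ∘ l₀.succAbove)).det : ℤ) : ℝ)| ∈ subdets A :=
      ⟨m, id, e ∘ l₀.succAbove, Function.injective_id,
        he.comp Fin.succAbove_right_injective, rfl⟩
    have hle := hD.2 hmem
    rw [hcollapse, hsub]
    push_cast
    rw [abs_mul, abs_pow, abs_neg, abs_one, one_pow, one_mul]
    push_cast at hle; exact hle
  · push_neg at hex
    have hrow0 : ∀ l, M (Fin.last m) l = 0 := by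
      intro l
      rw [hM]
      simp only [Matrix.submatrix_apply, id_eq]
      rw [intU_last, if_neg (hex l)]
    rw [Matrix.det_eq_zero_of_row_eq_zero (Fin.last m) hrow0]
    simp only [Int.cast_zero, abs_zero]
    linarith [D_ge_one hD]

lemma gram_sum {m n : ℕ} (A : Matrix (Fin m) (Fin n) ℤ) (w : Fin n → ℝ) (j i : Fin n) :
    (rU A j * Matrix.diagonal w * (rU A i)ᵀ).det
      = ∑ s : {s : Finset (Fin n) // s.card = m+1},
          (∏ b, w (s.1.orderEmbOfFin s.2 b)) *
          (((((intU A j).submatrix id (s.1.orderEmbOfFin s.2)).det : ℤ) : ℝ) *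
           ((((intU A i).submatrix id (s.1.orderEmbOfFin s.2)).det : ℤ) : ℝ)) := by
  rw [cb_grouped (rU A j * Matrix.diagonal w) ((rU A i)ᵀ)]
  refine Finset.sum_congr rfl fun s _ => ?_
  have h1 : (rU A j * Matrix.diagonal w).submatrix id (s.1.orderEmbOfFin s.2)
      = (rU A j).submatrix id (s.1.orderEmbOfFin s.2)
          * Matrix.diagonal (w ∘ (s.1.orderEmbOfFin s.2)) := by
    ext a b
    simp [Matrix.mul_diagonal, Matrix.submatrix_apply]
  have h2 : ((rU A i)ᵀ.submatrix (s.1.orderEmbOfFin s.2) id)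
      = ((rU A i).submatrix id (s.1.orderEmbOfFin s.2))ᵀ := by
    rw [Matrix.transpose_submatrix]
  have h3 : ∀ j' : Fin n, (rU A j').submatrix id (s.1.orderEmbOfFin s.2)
      = ((intU A j').submatrix id (s.1.orderEmbOfFin s.2)).map (Int.cast : ℤ → ℝ) := by
    intro j'; ext a b; simp [rU, Matrix.map_apply]
  have h4 : ∀ j' : Fin n, (((intU A j').submatrix id (s.1.orderEmbOfFin s.2)).map
      (Int.cast : ℤ → ℝ)).det
      = ((((intU A j').submatrix id (s.1.orderEmbOfFin s.2)).det : ℤ) : ℝ) := by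
    intro j'
    exact (RingHom.map_det (Int.castRingHom ℝ)
      ((intU A j').submatrix id (s.1.orderEmbOfFin s.2))).symm
  rw [h1, h2, Matrix.det_mul, Matrix.det_diagonal, Matrix.det_transpose, h3, h3, h4, h4]
  simp only [Function.comp_apply]
  ring

lemma border_eq {m n : ℕ} (A : Matrix (Fin m) (Fin n) ℤ) (w : Fin n → ℝ) (j i : Fin n) :
    rU A j * Matrix.diagonal w * (rU A i)ᵀ
      = (Matrix.fromBlocks (rmat A * Matrix.diagonal w * (rmat A)ᵀ)
          (Matrix.of fun k (_ : Fin 1) => w i * rmat A k i)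
          (Matrix.of fun (_ : Fin 1) k => w j * rmat A k j)
          (Matrix.of fun _ _ => if i = j then w i else 0)).submatrix
          finSumFinEquiv.symm finSumFinEquiv.symm := by
  set B := rmat A
  have finl : ∀ k : Fin m, (finSumFinEquiv (Sum.inl k) : Fin (m + 1)) = Fin.castSucc k :=
    fun k => rfl
  have finr : ∀ z : Fin 1, (finSumFinEquiv (Sum.inr z) : Fin (m + 1)) = Fin.last m := by
    intro z
    have : z = 0 := Subsingleton.elim _ _
    subst this; rfl
  have hprod : ∀ (j' i' : Fin n) (p q : Fin (m+1)),
      (rU A j' * Matrix.diagonal w * (rU A i')ᵀ) p q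
        = ∑ l, rU A j' p l * w l * rU A i' q l := by
    intro j' i' p q
    rw [Matrix.mul_apply]
    refine Finset.sum_congr rfl fun l _ => ?_
    rw [Matrix.mul_diagonal, Matrix.transpose_apply]
  ext p q
  rw [← Equiv.apply_symm_apply finSumFinEquiv p, ← Equiv.apply_symm_apply finSumFinEquiv q]
  generalize finSumFinEquiv.symm p = a
  generalize finSumFinEquiv.symm q = b
  rw [Matrix.submatrix_apply, Equiv.symm_apply_apply, Equiv.symm_apply_apply]
  rcases a with k | z <;> rcases b with k' | z'
  · rw [hprod, finl, finl]
    simp only [Matrix.fromBlocks_apply₁₁]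
    simp only [rU_castSucc]
    rw [Matrix.mul_apply]
    refine Finset.sum_congr rfl fun l _ => ?_
    rw [Matrix.mul_diagonal, Matrix.transpose_apply]
  · rw [hprod, finl, finr]
    simp only [Matrix.fromBlocks_apply₁₂, Matrix.of_apply]
    simp only [rU_castSucc, rU_last]
    rw [Finset.sum_eq_single i]
    · rw [if_pos rfl]; ring
    · intro l _ hl; rw [if_neg hl, mul_zero]
    · intro h; exact absurd (Finset.mem_univ _) h
  · rw [hprod, finr, finl]
    simp only [Matrix.fromBlocks_apply₂₁, Matrix.of_apply]
    simp only [rU_castSucc, rU_last]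
    rw [Finset.sum_eq_single j]
    · rw [if_pos rfl]; ring
    · intro l _ hl; rw [if_neg hl, zero_mul, zero_mul]
    · intro h; exact absurd (Finset.mem_univ _) h
  · rw [hprod, finr, finr]
    simp only [Matrix.fromBlocks_apply₂₂, Matrix.of_apply]
    simp only [rU_last]
    by_cases h : i = j
    · subst h
      rw [Finset.sum_eq_single i]
      · simp
      · intro l _ hl; simp [hl]
      · intro h; exact absurd (Finset.mem_univ _) h
    · rw [if_neg h]
      apply Finset.sum_eq_zero
      intro l _
      by_cases hl : l = j
      · subst hl
        rw [if_neg (fun hc : l = i => h hc.symm), mul_zero]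
      · simp [hl]

-- to be inserted before the main theorem
lemma key_bound {m n : ℕ} (A : Matrix (Fin m) (Fin n) ℤ) {𝒟 : ℝ}
    (hD : IsGreatest (subdets A) 𝒟) (w : Fin n → ℝ) (hw : ∀ i, 0 < w i)
    (hB : ∀ v : Fin m → ℝ, (rmat A)ᵀ *ᵥ v = 0 → v = 0) (j i : Fin n) :
    |((rmat A)ᵀ * (rmat A * Matrix.diagonal w * (rmat A)ᵀ)⁻¹
        * (rmat A * Matrix.diagonal w)) j i| ≤ 𝒟 := by
  classical
  set B := rmat A with hBdef
  set L := B * Matrix.diagonal w * Bᵀ with hLdef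
  have hpd := L_posdef B w hw hB
  have hdet : 0 < L.det := hpd.det_pos
  have hunit : IsUnit L.det := isUnit_iff_ne_zero.mpr hdet.ne'
  set Mm := Bᵀ * L⁻¹ * (B * Matrix.diagonal w) with hMm
  -- the dot-product identity
  have hdot : ∀ i' : Fin n,
      (fun k => w j * B k j) ⬝ᵥ (L⁻¹ *ᵥ (fun k => w i' * B k i')) = w j * Mm j i' := by
    intro i'
    have e1 : Mm j i' = ∑ k, (∑ k', B k' j * L⁻¹ k' k) * (B k i' * w i') := by
      rw [hMm, Matrix.mul_apply]
      refine Finset.sum_congr rfl fun k _ => ?_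
      rw [Matrix.mul_diagonal, Matrix.mul_apply]
      simp only [Matrix.transpose_apply]
    rw [e1, Finset.mul_sum]
    simp only [dotProduct, Matrix.mulVec, Finset.mul_sum]
    rw [Finset.sum_comm]
    refine Finset.sum_congr rfl fun k _ => ?_
    rw [Finset.sum_mul, Finset.mul_sum]
    refine Finset.sum_congr rfl fun k' _ => ?_
    ring
  -- border determinant values
  have hborder : ∀ i' : Fin n, (rU A j * Matrix.diagonal w * (rU A i')ᵀ).det
      = L.det * ((if i' = j then w i' else 0) - w j * Mm j i') := by
    intro i'
    rw [border_eq A w j i', bordered_det L hunit _ _ _, hdot i']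
  -- gram positivity and bound
  have hgjj : 0 ≤ (rU A j * Matrix.diagonal w * (rU A j)ᵀ).det := by
    rw [gram_sum]
    refine Finset.sum_nonneg fun s _ => ?_
    refine mul_nonneg (Finset.prod_nonneg fun b _ => (hw _).le) (mul_self_nonneg _)
  have habs : |(rU A j * Matrix.diagonal w * (rU A i)ᵀ).det|
      ≤ 𝒟 * (rU A j * Matrix.diagonal w * (rU A j)ᵀ).det := by
    rw [gram_sum, gram_sum, Finset.mul_sum]
    refine (Finset.abs_sum_le_sum_abs _ _).trans (Finset.sum_le_sum fun s _ => ?_)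
    set e := s.1.orderEmbOfFin s.2
    set dj : ℤ := ((intU A j).submatrix id e).det with hdj
    set di : ℤ := ((intU A i).submatrix id e).det with hdi
    have hprodpos : (0:ℝ) ≤ ∏ b, w (e b) := Finset.prod_nonneg fun b _ => (hw _).le
    have hdel : |((di : ℤ) : ℝ)| ≤ 𝒟 := delta_bound A hD i e (e.injective)
    rcases eq_or_ne dj 0 with h0 | h0
    · simp [h0]
    · have h1 : (1:ℝ) ≤ |((dj : ℤ) : ℝ)| := by
        rw [← Int.cast_abs]
        exact_mod_cast Int.one_le_abs h0
      rw [abs_mul, abs_mul, abs_of_nonneg hprodpos]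
      calc (∏ b, w (e b)) * (|((dj:ℤ):ℝ)| * |((di:ℤ):ℝ)|)
          ≤ (∏ b, w (e b)) * ((|((dj:ℤ):ℝ)| * |((dj:ℤ):ℝ)|) * 𝒟) := by
            refine mul_le_mul_of_nonneg_left ?_ hprodpos
            calc |((dj:ℤ):ℝ)| * |((di:ℤ):ℝ)| ≤ |((dj:ℤ):ℝ)| * 𝒟 :=
                mul_le_mul_of_nonneg_left hdel (abs_nonneg _)
            _ ≤ (|((dj:ℤ):ℝ)| * |((dj:ℤ):ℝ)|) * 𝒟 := by
                refine mul_le_mul_of_nonneg_right ?_ (le_trans zero_le_one (D_ge_one hD))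
                nlinarith [abs_nonneg (((dj:ℤ):ℝ))]
      _ = 𝒟 * ((∏ b, w (e b)) * (((dj:ℤ):ℝ) * ((dj:ℤ):ℝ))) := by
            rw [abs_mul_abs_self]; ring
  -- M j j is nonneg
  have hMjj0 : 0 ≤ Mm j j := by
    have hsmul : (fun k => w j * B k j) = w j • (fun k => B k j) := by
      funext k; simp [Pi.smul_apply, smul_eq_mul]
    have hq : w j * Mm j j = w j * w j * ((fun k => B k j) ⬝ᵥ (L⁻¹ *ᵥ (fun k => B k j))) := by
      rw [← hdot j, hsmul, Matrix.mulVec_smul, dotProduct_smul, smul_dotProduct]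
      simp [smul_eq_mul]; ring
    have hq0 : 0 ≤ (fun k => B k j) ⬝ᵥ (L⁻¹ *ᵥ (fun k => B k j)) := by
      set β : Fin m → ℝ := fun k => B k j
      set u0 := L⁻¹ *ᵥ β with hu0
      have hLu : L *ᵥ u0 = β := by
        rw [hu0, Matrix.mulVec_mulVec, Matrix.mul_nonsing_inv L hunit, Matrix.one_mulVec]
      have : β ⬝ᵥ u0 = u0 ⬝ᵥ (L *ᵥ u0) := by
        rw [hLu, dotProduct_comm]
      rw [this]
      have := hpd.posSemidef.dotProduct_mulVec_nonneg u0
      rwa [show star u0 = u0 from by funext k; simp] at this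
    nlinarith [hq, hq0, hw j, mul_nonneg (mul_nonneg (hw j).le (hw j).le) hq0]
  -- g j j ≤ L.det * w j  and  M j j ≤ 1
  have hjj := hborder j
  rw [if_pos rfl] at hjj
  have hMjj1 : Mm j j ≤ 1 := by
    by_contra hcon
    push_neg at hcon
    have : (rU A j * Matrix.diagonal w * (rU A j)ᵀ).det < 0 := by
      rw [hjj]
      have : w j - w j * Mm j j < 0 := by nlinarith [hw j]
      exact mul_neg_of_pos_of_neg hdet this
    linarith
  have hgjj_le : (rU A j * Matrix.diagonal w * (rU A j)ᵀ).det ≤ L.det * w j := by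
    rw [hjj]
    have h : w j - w j * Mm j j ≤ w j := by nlinarith [hw j]
    exact mul_le_mul_of_nonneg_left h hdet.le
  rcases eq_or_ne i j with hij | hij
  · subst hij
    rw [abs_of_nonneg hMjj0]
    exact hMjj1.trans (D_ge_one hD)
  · have hij' : (rU A j * Matrix.diagonal w * (rU A i)ᵀ).det = -(L.det * (w j * Mm j i)) := by
      rw [hborder i, if_neg hij]
      ring
    have habs' : L.det * w j * |Mm j i| ≤ 𝒟 * (L.det * w j) := by
      have h1 : |(rU A j * Matrix.diagonal w * (rU A i)ᵀ).det| = L.det * w j * |Mm j i| := by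
        rw [hij', abs_neg, abs_mul, abs_mul, abs_of_nonneg hdet.le, abs_of_nonneg (hw j).le,
          mul_assoc]
      have h2 := habs
      rw [h1] at h2
      exact h2.trans (mul_le_mul_of_nonneg_left hgjj_le (le_trans zero_le_one (D_ge_one hD)))
    have hpos : 0 < L.det * w j := mul_pos hdet (hw j)
    nlinarith [habs', hpos]

theorem subdet_bound_feasible_point {m n : ℕ} (A : Matrix (Fin m) (Fin n) ℤ)
    (hrank : (rmat A).rank = m)
    (𝒟 : ℝ) (hD : IsGreatest (subdets A) 𝒟)
    (b : Fin m → ℤ) (c : Fin n → ℤ) (hc : ∀ i, 0 < c i)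
    (x : Fin n → ℝ) (hx : ∀ i, 0 < x i)
    (hfeas : rmat A *ᵥ x = fun j => (b j : ℝ))
    (p : Fin m → ℝ)
    (hp : (rmat A * physW (fun i => (c i : ℝ)) x * (rmat A)ᵀ) *ᵥ p = fun j => (b j : ℝ)) :
    ∀ j, |((rmat A)ᵀ *ᵥ p) j| ≤ 𝒟 * ∑ i, (c i : ℝ) := by
  intro j
  classical
  set cR : Fin n → ℝ := fun i => (c i : ℝ) with hcR
  have hcpos : ∀ i, 0 < cR i := fun i => Int.cast_pos.mpr (hc i)
  set w : Fin n → ℝ := fun i => x i / cR i with hwdef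
  have hwpos : ∀ i, 0 < w i := fun i => div_pos (hx i) (hcpos i)
  have hWdiag : physW (fun i => (c i : ℝ)) x = Matrix.diagonal w := rfl
  set B := rmat A with hBdef
  set L := B * Matrix.diagonal w * Bᵀ with hLdef
  have hBinj : ∀ v : Fin m → ℝ, Bᵀ *ᵥ v = 0 → v = 0 :=
    fun v hv => rank_vecMul_inj B hrank v hv
  have hpd := L_posdef B w hwpos hBinj
  have hdet : 0 < L.det := hpd.det_pos
  have hunit : IsUnit L.det := isUnit_iff_ne_zero.mpr hdet.ne'
  have hp' : L *ᵥ p = fun j => (b j : ℝ) := by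
    rw [hLdef, hBdef, ← hWdiag]
    exact hp
  have hxw : Matrix.diagonal w *ᵥ cR = x := by
    funext i
    rw [Matrix.mulVec_diagonal]
    exact div_mul_cancel₀ (x i) (hcpos i).ne'
  have hbvec : (fun j => (b j : ℝ)) = B *ᵥ (Matrix.diagonal w *ᵥ cR) := by
    rw [hxw, hfeas]
  have hpsolve : p = L⁻¹ *ᵥ (fun j => (b j : ℝ)) := by
    rw [← hp', Matrix.mulVec_mulVec, Matrix.nonsing_inv_mul L hunit, Matrix.one_mulVec]
  have hz : Bᵀ *ᵥ p = (Bᵀ * L⁻¹ * (B * Matrix.diagonal w)) *ᵥ cR := by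
    rw [hpsolve, hbvec, Matrix.mulVec_mulVec, Matrix.mulVec_mulVec, Matrix.mulVec_mulVec,
      Matrix.mul_assoc, Matrix.mul_assoc]
  rw [hz]
  have hkey : ∀ i, |(Bᵀ * L⁻¹ * (B * Matrix.diagonal w)) j i| ≤ 𝒟 :=
    fun i => key_bound A hD w hwpos hBinj j i
  have hexp : ((Bᵀ * L⁻¹ * (B * Matrix.diagonal w)) *ᵥ cR) j
      = ∑ i, (Bᵀ * L⁻¹ * (B * Matrix.diagonal w)) j i * cR i := rfl
  rw [hexp]
  calc |∑ i, (Bᵀ * L⁻¹ * (B * Matrix.diagonal w)) j i * cR i|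
      ≤ ∑ i, |(Bᵀ * L⁻¹ * (B * Matrix.diagonal w)) j i * cR i| :=
        Finset.abs_sum_le_sum_abs _ _
  _ ≤ ∑ i, 𝒟 * cR i := by
        refine Finset.sum_le_sum fun i _ => ?_
        rw [abs_mul, abs_of_nonneg (hcpos i).le]
        exact mul_le_mul_of_nonneg_right (hkey i) (hcpos i).le
  _ = 𝒟 * ∑ i, cR i := by rw [Finset.mul_sum]
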